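/- Let n ≥ 1 and let M be a symmetric n×n real matrix which is negative definite and satisfies M_{ij} ≥ 0 for all i ≠ j. Suppose moreover that the graph on {1,…,n} having an edge between i and j (i ≠ j) whenever M_{ij} > 0 is connected. If a, b ∈ ℝ^n satisfy (M a)_j ≥ (M b)_j for every j, then either a = b, or a_j < b_j for every j. -/
import Mathlib


open Matrix

/-- If a walk goes from a vertex satisfying `P` to one not satisfying `P`,
some edge crosses the boundary. -/
lemma walk_cross {V : Type*} {G : SimpleGraph V} {P : V → Prop} :
    ∀ {s t : V}, G.Walk s t → P s → ¬ P t →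
      ∃ u v, G.Adj u v ∧ P u ∧ ¬ P v := by
  intro s t w
  induction w with
  | nil => intro hs ht; exact absurd hs ht
  | @cons x y z h w ih =>
      intro hs ht
      by_cases hy : P y
      · exact ih hy ht
      · exact ⟨x, y, h, hs, hy⟩

/-- Negativity lemma (linear algebra form): if `M` is a symmetric negative definite
real `n × n` matrix with nonnegative off-diagonal entries whose positivity graph is
connected, and `(M a)_j ≥ (M b)_j` for all `j`, then `a = b` or `a_j < b_j` for all `j`. -/
theorem negativity_lemma (n : ℕ) (hn : 1 ≤ n) (M : Matrix (Fin n) (Fin n) ℝ)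
    (hsymm : ∀ i j, M i j = M j i)
    (hnegdef : ∀ x : Fin n → ℝ, x ≠ 0 → x ⬝ᵥ (M *ᵥ x) < 0)
    (hoffdiag : ∀ i j, i ≠ j → 0 ≤ M i j)
    (hconn : (SimpleGraph.fromRel (fun i j => 0 < M i j)).Connected)
    (a b : Fin n → ℝ) (hab : ∀ j, (M *ᵥ b) j ≤ (M *ᵥ a) j) :
    a = b ∨ ∀ j, a j < b j := by
  set c : Fin n → ℝ := a - b with hcdef
  have hc : ∀ j, 0 ≤ (M *ᵥ c) j := by
    intro j
    have : (M *ᵥ c) j = (M *ᵥ a) j - (M *ᵥ b) j := by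
      rw [hcdef, Matrix.mulVec_sub]; rfl
    rw [this]
    linarith [hab j]
  -- Step 1: c ≤ 0 everywhere
  have key : ∀ i, c i ≤ 0 := by
    by_contra h
    push_neg at h
    obtain ⟨i0, hi0⟩ := h
    set p : Fin n → ℝ := fun i => max (c i) 0 with hp
    set m : Fin n → ℝ := fun i => max (-c i) 0 with hm
    have hpnonneg : ∀ i, 0 ≤ p i := fun i => le_max_right _ _
    have hmnonneg : ∀ i, 0 ≤ m i := fun i => le_max_right _ _
    have hpm : ∀ i, c i + m i = p i := by
      intro i
      rcases le_total (c i) 0 with h' | h'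
      · simp [hp, hm, max_eq_right h', max_eq_left (neg_nonneg.mpr h')]
      · have : -c i ≤ 0 := neg_nonpos.mpr h'
        simp [hp, hm, max_eq_left h', max_eq_right this]
    have hpm0 : ∀ i, p i * m i = 0 := by
      intro i
      rcases le_total (c i) 0 with h' | h'
      · simp [hp, max_eq_right h']
      · simp [hm, max_eq_right (neg_nonpos.mpr h')]
    have hpne : p ≠ 0 := by
      intro hz
      have : p i0 = 0 := by rw [hz]; rfl
      have : c i0 ≤ 0 := by
        have := le_max_left (c i0) 0
        simp [hp] at *
        linarith
      linarith
    have hsum : M *ᵥ p = M *ᵥ c + M *ᵥ m := by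
      rw [← Matrix.mulVec_add]
      have hce : c + m = p := funext fun i => hpm i
      rw [hce]
    have h1 : 0 ≤ p ⬝ᵥ (M *ᵥ c) := by
      apply Finset.sum_nonneg
      intro j _
      exact mul_nonneg (hpnonneg j) (hc j)
    have h2 : 0 ≤ p ⬝ᵥ (M *ᵥ m) := by
      apply Finset.sum_nonneg
      intro j _
      rw [Matrix.mulVec, dotProduct, Finset.mul_sum]
      apply Finset.sum_nonneg
      intro i _
      by_cases hij : i = j
      · subst hij
        rw [show p i * (M i i * m i) = M i i * (p i * m i) by ring, hpm0 i, mul_zero]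
      · exact mul_nonneg (hpnonneg j) (mul_nonneg (hoffdiag j i (Ne.symm hij)) (hmnonneg i))
    have hlt := hnegdef p hpne
    rw [hsum, dotProduct_add] at hlt
    linarith
  -- Step 2: split on c = 0
  by_cases hcz : c = 0
  · left
    have : a - b = 0 := hcz
    exact sub_eq_zero.mp this
  · right
    -- there is a vertex with c < 0
    have hex : ∃ s, c s < 0 := by
      by_contra h
      push_neg at h
      apply hcz
      funext i
      exact le_antisymm (key i) (h i)
    obtain ⟨s, hs⟩ := hex
    -- show c j < 0 for all j
    have hall : ∀ j, c j < 0 := by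
      by_contra h
      push_neg at h
      obtain ⟨t, ht⟩ := h
      have htz : c t = 0 := le_antisymm (key t) ht
      obtain ⟨w⟩ := hconn.preconnected s t
      obtain ⟨u, v, hadj, hu, hv⟩ :=
        walk_cross (P := fun x => c x < 0) w hs (not_lt.mpr ht)
      have hvz : c v = 0 := le_antisymm (key v) (not_lt.mp hv)
      rw [SimpleGraph.fromRel_adj] at hadj
      obtain ⟨hne, hpos⟩ := hadj
      have hMvu : 0 < M v u := by
        rcases hpos with h' | h'
        · rw [hsymm u v] at h'; exact h'
        · exact h'
      have huv : u ≠ v := hne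
      have hneg : (M *ᵥ c) v < 0 := by
        rw [Matrix.mulVec, dotProduct]
        have : (∑ i, M v i * c i) < ∑ _i : Fin n, (0 : ℝ) := by
          apply Finset.sum_lt_sum
          · intro i _
            by_cases hiv : i = v
            · subst hiv; rw [hvz, mul_zero]
            · exact mul_nonpos_of_nonneg_of_nonpos (hoffdiag v i (Ne.symm hiv)) (key i)
          · exact ⟨u, Finset.mem_univ u, mul_neg_of_pos_of_neg hMvu hu⟩
        simpa using this
      exact absurd (hc v) (not_le.mpr hneg)
    intro j
    have := hall j
    have : a j - b j < 0 := this
    linarith
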